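/- The m(m+1)/2 polynomials (WᵀW)_{ij} with 1 ≤ i ≤ j ≤ m are algebraically independent over K in K[W]. Equivalently, if T′ = (T′_{ij}) is the m×m symmetric matrix of indeterminates (with {T′_{ij} : 1 ≤ i ≤ j ≤ m} independent indeterminates and T′_{ji} := T′_{ij}), then the K-algebra homomorphism from the polynomial ring K[T′_{ij} : 1 ≤ i ≤ j ≤ m] to K[W] sending T′_{ij} to (WᵀW)_{ij} is injective, and hence induces an isomorphism K[T′] ≅ K[WᵀW]. -/

import Mathlib

open MvPolynomial Matrix

/-- The `m × m` matrix `W` of indeterminates, with entries in `K[W] = K[W_{ij}]`. -/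
noncomputable def Wsq (K : Type) [Field K] (m : ℕ) :
    Matrix (Fin m) (Fin m) (MvPolynomial (Fin m × Fin m) K) :=
  fun i j => X (i, j)


theorem my_core {σ : Type} {K : Type} [Field K] [DecidableEq σ] (v : σ)
    (c g : MvPolynomial σ K) (d : ℕ) (hd : d ≠ 0) (hc0 : c ≠ 0)
    (hc : c ∈ MvPolynomial.supported K {w | w ≠ v})
    (hg : g ∈ MvPolynomial.supported K {w | w ≠ v}) :
    Transcendental (MvPolynomial.supported K {w | w ≠ v})
      (c * (MvPolynomial.X v) ^ d + g) := by
  let Φ : MvPolynomial σ K →ₐ[K] Polynomial (MvPolynomial σ K) :=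
    MvPolynomial.aeval (fun w => if w = v then Polynomial.X else Polynomial.C (MvPolynomial.X w))
  have hΦ : ∀ q ∈ MvPolynomial.supported K {w | w ≠ v}, Φ q = Polynomial.C q := by
    intro q hq
    rw [MvPolynomial.supported] at hq
    induction hq using Algebra.adjoin_induction with
    | mem x hx =>
      obtain ⟨w, hw, rfl⟩ := hx
      rw [show Φ (MvPolynomial.X w) = _ from MvPolynomial.aeval_X _ w,
        if_neg (show w ≠ v from hw)]
    | algebraMap r =>
      simp only [AlgHom.commutes]
      rw [MvPolynomial.algebraMap_eq, Polynomial.algebraMap_apply]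
      rfl
    | add x y hx hy ihx ihy => rw [_root_.map_add, ihx, ihy, _root_.map_add]
    | mul x y hx hy ihx ihy => rw [_root_.map_mul, ihx, ihy, _root_.map_mul]
  have key : Φ (c * MvPolynomial.X v ^ d + g)
      = Polynomial.C g + Polynomial.C c * Polynomial.X ^ d := by
    rw [_root_.map_add, _root_.map_mul, map_pow, hΦ c hc, hΦ g hg,
      show Φ (MvPolynomial.X v) = _ from MvPolynomial.aeval_X _ v, if_pos rfl]
    ring
  have hdegC : (Polynomial.C g : Polynomial (MvPolynomial σ K)).degree
      < (Polynomial.C c * Polynomial.X ^ d : Polynomial (MvPolynomial σ K)).degree := by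
    calc (Polynomial.C g : Polynomial (MvPolynomial σ K)).degree ≤ 0 := Polynomial.degree_C_le
    _ < (d : WithBot ℕ) := by exact_mod_cast Nat.pos_of_ne_zero hd
    _ = (Polynomial.C c * Polynomial.X ^ d : Polynomial (MvPolynomial σ K)).degree :=
        (Polynomial.degree_C_mul_X_pow d hc0).symm
  have htr : Transcendental (MvPolynomial σ K) (Φ (c * MvPolynomial.X v ^ d + g)) := by
    rw [key]
    apply Polynomial.transcendental
    · have hdd : (Polynomial.C g + Polynomial.C c * Polynomial.X ^ d
            : Polynomial (MvPolynomial σ K)).degree = (d : WithBot ℕ) :=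
        (Polynomial.degree_add_eq_right_of_degree_lt hdegC).trans
          (Polynomial.degree_C_mul_X_pow d hc0)
      rw [Polynomial.natDegree_eq_of_degree_eq_some hdd]
      exact hd
    · have hl : (Polynomial.C g + Polynomial.C c * Polynomial.X ^ d
            : Polynomial (MvPolynomial σ K)).leadingCoeff
          = (Polynomial.C c * Polynomial.X ^ d
            : Polynomial (MvPolynomial σ K)).leadingCoeff :=
        Polynomial.leadingCoeff_add_of_degree_lt hdegC
      rw [hl, Polynomial.leadingCoeff_mul, Polynomial.leadingCoeff_C,
        Polynomial.leadingCoeff_X_pow, mul_one]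
      exact mem_nonZeroDivisors_of_ne_zero hc0
  exact Transcendental.of_ringHom_of_comp_eq
    (algebraMap (MvPolynomial.supported K {w | w ≠ v}) (MvPolynomial σ K)) Φ.toRingHom htr
    Subtype.val_injective
    (RingHom.ext fun b => ((hΦ (b : MvPolynomial σ K) b.2).symm))


theorem my_ind {K A : Type} [Field K] [CommRing A] [Nontrivial A] [Algebra K A]
    {ι : Type} [Fintype ι] [LinearOrder ι] (f : ι → A)
    (H : ∀ i : ι, Transcendental (Algebra.adjoin K (f '' {j | j < i})) (f i)) :
    AlgebraicIndependent K f := by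
  classical
  have main : ∀ s : Finset ι, AlgebraicIndependent K (fun x : (s : Set ι) => f x) := by
    intro s
    induction s using Finset.induction_on_max with
    | empty =>
      haveI : IsEmpty (((∅ : Finset ι) : Set ι) : Type) := by
        rw [Finset.coe_empty]; infer_instance
      exact algebraicIndependent_empty_type
    | insert a s hmax ih =>
      have ha' : a ∉ (s : Set ι) := fun h => lt_irrefl a (hmax a h)
      have htrans : Transcendental
          (Algebra.adjoin K (Set.range fun x : (s : Set ι) => f x)) (f a) := by
        have hrange : (Set.range fun x : (s : Set ι) => f x) = f '' (s : Set ι) := by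
          ext y; simp [Set.mem_image]
        rw [hrange]
        refine Transcendental.of_tower_top_of_subalgebra_le ?_ (H a)
        exact Algebra.adjoin_mono (Set.image_mono fun x hx => hmax x hx)
      have hopt := (ih.option_iff_transcendental (f a)).2 htrans
      rw [Finset.coe_insert]
      have h2 := (algebraicIndependent_equiv (Set.subtypeInsertEquivOption ha')).2 hopt
      have heq : (fun x : ((insert a (s : Set ι) : Set ι) : Type) => f ↑x)
          = (fun o : Option ((s : Set ι) : Type) => o.elim (f a) fun x => f ↑x)
            ∘ (Set.subtypeInsertEquivOption ha') := by
        funext x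
        by_cases h : (x : ι) = a <;> simp [Set.subtypeInsertEquivOption, h]
      rw [heq]
      exact h2
  have huniv := main Finset.univ
  have h3 := (algebraicIndependent_equiv
    ((Equiv.Set.univ ι).symm.trans (Equiv.setCongr (Finset.coe_univ (α := ι)).symm))).2 huniv
  exact h3

/-- The `m(m+1)/2` entries `(WᵀW)_{ij}` with `i ≤ j` are algebraically independent over
`K`; equivalently, the `K`-algebra map `K[T′_{ij} : 1 ≤ i ≤ j ≤ m] → K[W]`,
`T′_{ij} ↦ (WᵀW)_{ij}`, is injective, hence induces an isomorphism `K[T′] ≅ K[WᵀW]`. -/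
theorem stmt_6 (K : Type) [Field K] (m : ℕ) (hm : 1 ≤ m) :
    AlgebraicIndependent K
      (fun p : {p : Fin m × Fin m // p.1 ≤ p.2} =>
        ((Wsq K m)ᵀ * Wsq K m) p.1.1 p.1.2) := by
  classical
  let φ : MvPolynomial (Fin m × Fin m) K →ₐ[K] MvPolynomial (Fin m × Fin m) K :=
    MvPolynomial.aeval (fun w => if w.1 ≤ w.2 then MvPolynomial.X w else 0)
  apply AlgebraicIndependent.of_comp φ
  let u : {p : Fin m × Fin m // p.1 ≤ p.2} → MvPolynomial (Fin m × Fin m) K :=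
    fun p => ∑ k : Fin m,
      (if k ≤ p.1.1 then MvPolynomial.X (k, p.1.1) else 0) *
      (if k ≤ p.1.2 then MvPolynomial.X (k, p.1.2) else 0)
  have hcomp : (⇑φ ∘ fun p : {p : Fin m × Fin m // p.1 ≤ p.2} =>
      ((Wsq K m)ᵀ * Wsq K m) p.1.1 p.1.2) = u := by
    funext p
    simp only [Function.comp_apply, Matrix.mul_apply, Matrix.transpose_apply, Wsq, u]
    rw [map_sum]
    refine Finset.sum_congr rfl fun k _ => ?_
    rw [_root_.map_mul]
    simp only [φ, MvPolynomial.aeval_X]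
  rw [hcomp]
  have hu : u = fun p => ∑ k : Fin m,
      (if k ≤ p.1.1 then MvPolynomial.X (k, p.1.1) else 0) *
      (if k ≤ p.1.2 then MvPolynomial.X (k, p.1.2) else 0) := rfl
  classical
  -- transfer to the lex-ordered index type
  let ιL := {q : Lex (Fin m × Fin m) // (ofLex q).1 ≤ (ofLex q).2}
  let e : {p : Fin m × Fin m // p.1 ≤ p.2} ≃ ιL :=
    Equiv.subtypeEquiv toLex (fun a => Iff.rfl)
  let u' : ιL → MvPolynomial (Fin m × Fin m) K := fun q => u (e.symm q)
  have hue : u = u' ∘ e := by funext p; simp [u', ιL]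
  rw [hue]
  refine (algebraicIndependent_equiv e).2 ?_
  apply my_ind u'
  rintro ⟨⟨i, j⟩, hij⟩
  have hij' : i ≤ j := hij
  let P : ιL := ⟨toLex (i, j), hij⟩
  show Transcendental (Algebra.adjoin K (u' '' {q | q < P})) (u' P)
  -- the strictly-smaller elements
  have hlt : ∀ q : ιL, q < P →
      ((ofLex q.val).1 < i ∨ ((ofLex q.val).1 = i ∧ (ofLex q.val).2 < j)) := by
    rintro ⟨q1, h1⟩ hq
    have : q1 < toLex (i, j) := Subtype.mk_lt_mk.1 hq
    have h2 : toLex (ofLex q1) < toLex (i, j) := this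
    exact (Prod.Lex.lt_iff).1 h2
  -- u' of an element
  have hu' : ∀ q : ιL, u' q = ∑ k : Fin m,
      (if k ≤ (ofLex q.val).1 then MvPolynomial.X (k, (ofLex q.val).1) else 0) *
      (if k ≤ (ofLex q.val).2 then MvPolynomial.X (k, (ofLex q.val).2) else 0) := by
    rintro ⟨q1, h1⟩
    simp only [u', hu, e, Equiv.subtypeEquiv_symm]
    rfl
  have hsupp : ∀ q : ιL, q < P →
      u' q ∈ MvPolynomial.supported K {w | w ≠ (i, j)} := by
    intro q hq
    obtain hq' := hlt q hq
    rw [hu' q]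
    apply Subalgebra.sum_mem
    intro r _
    have hkl' : (ofLex q.val).1 ≤ (ofLex q.val).2 := q.prop
    set k : Fin m := (ofLex q.val).1 with hk0
    set l : Fin m := (ofLex q.val).2 with hl0
    by_cases h1 : r ≤ k
    · by_cases h2 : r ≤ l
      · rw [if_pos h1, if_pos h2]
        refine Subalgebra.mul_mem _ (MvPolynomial.X_mem_supported.2 ?_)
          (MvPolynomial.X_mem_supported.2 ?_)
        · show (r, k) ≠ (i, j)
          intro he
          obtain ⟨hr, hkj⟩ := Prod.mk.inj he
          rcases hq' with h | ⟨h, h'⟩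
          · exact absurd (hkj ▸ h) (not_lt.2 hij')
          · have hji : j ≤ l := hkj ▸ hkl'
            exact absurd (lt_of_le_of_lt hji h') (lt_irrefl j)
        · show (r, l) ≠ (i, j)
          intro he
          obtain ⟨hr, hlj⟩ := Prod.mk.inj he
          rcases hq' with h | ⟨h, h'⟩
          · exact absurd (lt_of_le_of_lt (hr ▸ h1) h) (lt_irrefl i)
          · exact absurd (hlj ▸ h') (lt_irrefl j)
      · rw [if_neg h2, mul_zero]; exact Subalgebra.zero_mem _
    · rw [if_neg h1, zero_mul]; exact Subalgebra.zero_mem _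
  have hle : Algebra.adjoin K (u' '' {q | q < P})
      ≤ MvPolynomial.supported K {w | w ≠ (i, j)} := by
    rw [Algebra.adjoin_le_iff]
    rintro _ ⟨q, hq, rfl⟩
    exact hsupp q hq
  refine Transcendental.of_tower_top_of_subalgebra_le hle ?_
  have split : u' P = MvPolynomial.X (i, i) * MvPolynomial.X (i, j) +
      ∑ k ∈ Finset.univ.erase i,
        (if k ≤ i then MvPolynomial.X (k, i) * MvPolynomial.X (k, j) else 0) := by
    rw [hu']
    have hterm : ∀ k : Fin m, (if k ≤ i then MvPolynomial.X (k, i) else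
          (0 : MvPolynomial (Fin m × Fin m) K)) *
        (if k ≤ j then MvPolynomial.X (k, j) else 0)
        = (if k ≤ i then MvPolynomial.X (k, i) * MvPolynomial.X (k, j) else 0) := by
      intro k
      by_cases h : k ≤ i
      · rw [if_pos h, if_pos h, if_pos (h.trans hij')]
      · simp [h]
    show (∑ k : Fin m, (if k ≤ i then MvPolynomial.X (k, i) else
          (0 : MvPolynomial (Fin m × Fin m) K)) *
        (if k ≤ j then MvPolynomial.X (k, j) else 0)) = _
    simp only [hterm]
    rw [← Finset.add_sum_erase Finset.univ _ (Finset.mem_univ i), if_pos le_rfl]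
  have hgmem : (∑ k ∈ Finset.univ.erase i,
      (if k ≤ i then MvPolynomial.X (k, i) * MvPolynomial.X (k, j) else 0))
      ∈ MvPolynomial.supported K {w | w ≠ (i, j)} := by
    apply Subalgebra.sum_mem
    intro k hk
    have hki : k ≠ i := (Finset.mem_erase.1 hk).1
    by_cases h : k ≤ i
    · rw [if_pos h]
      refine Subalgebra.mul_mem _ (MvPolynomial.X_mem_supported.2 ?_)
        (MvPolynomial.X_mem_supported.2 ?_)
      · show (k, i) ≠ (i, j); intro he; exact hki (Prod.mk.inj he).1
      · show (k, j) ≠ (i, j); intro he; exact hki (Prod.mk.inj he).1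
    · rw [if_neg h]; exact Subalgebra.zero_mem _
  rw [split]
  by_cases hij2 : i = j
  · subst hij2
    have hrw : MvPolynomial.X (i, i) * MvPolynomial.X (i, i)
        = (1 : MvPolynomial (Fin m × Fin m) K) * (MvPolynomial.X (i, i)) ^ 2 := by ring
    rw [hrw]
    exact my_core (i, i) 1 _ 2 two_ne_zero one_ne_zero (Subalgebra.one_mem _) hgmem
  · have hrw : MvPolynomial.X (i, i) * MvPolynomial.X (i, j)
        = MvPolynomial.X (i, i) * (MvPolynomial.X (i, j) : MvPolynomial (Fin m × Fin m) K) ^ 1 := by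
      ring
    rw [hrw]
    refine my_core (i, j) (MvPolynomial.X (i, i)) _ 1 one_ne_zero (MvPolynomial.X_ne_zero _)
      (MvPolynomial.X_mem_supported.2 ?_) hgmem
    show (i, i) ≠ (i, j); intro he; exact hij2 (Prod.mk.inj he).2
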